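/- For 0 < k < n (with n > k), M^[k](1, n) ≥ ⌈n/k⌉ − 2 + ⌈log₂(n − (⌈n/k⌉ − 2)·k)⌉: the worst-case optimal number of size-k tests to find a single defective among n items is at least this quantity. -/

import Mathlib

/-- An adaptive group-testing strategy on a population of `n` items:
a binary decision tree whose internal nodes test a subset (branching on
contaminated / pure) and whose leaves output a guess for the defective set. -/
inductive GTTree (n : ℕ) : Type where
  | leaf (guess : Finset (Fin n)) : GTTree n
  | node (test : Finset (Fin n)) (pos neg : GTTree n) : GTTree n

/-- Run the strategy when the true defective set is `D`. -/
def GTTree.run {n : ℕ} (D : Finset (Fin n)) : GTTree n → Finset (Fin n)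
  | .leaf g => g
  | .node t p q => if (t ∩ D).Nonempty then p.run D else q.run D

/-- Worst-case number of tests performed by the strategy. -/
def GTTree.depth {n : ℕ} : GTTree n → ℕ
  | .leaf _ => 0
  | .node _ p q => max p.depth q.depth + 1

/-- The strategy correctly identifies every possible defective set of size `d`. -/
def GTTree.Solves {n : ℕ} (T : GTTree n) (d : ℕ) : Prop :=
  ∀ D : Finset (Fin n), D.card = d → T.run D = D

/-- Every test set occurring in the tree has size exactly `k`. -/
def GTTree.SizeK {n : ℕ} (k : ℕ) : GTTree n → Prop
  | .leaf _ => True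
  | .node t p q => t.card = k ∧ p.SizeK k ∧ q.SizeK k

/-- `M d n`: optimal worst-case number of adaptive tests to find the `d`
defectives among `n` items, test sets of arbitrary size (`⊤` if unsolvable). -/
noncomputable def M (d n : ℕ) : ℕ∞ :=
  sInf {c : ℕ∞ | ∃ T : GTTree n, T.Solves d ∧ (T.depth : ℕ∞) = c}

/-- `Mfix k d n`: optimal worst-case number of adaptive tests to find the `d`
defectives among `n` items, every test set of size exactly `k` (`⊤` if unsolvable). -/
noncomputable def Mfix (k d n : ℕ) : ℕ∞ :=
  sInf {c : ℕ∞ | ∃ T : GTTree n, T.SizeK k ∧ T.Solves d ∧ (T.depth : ℕ∞) = c}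

lemma infoBound {n : ℕ} (T : GTTree n) (S : Finset (Fin n))
    (h : ∀ i ∈ S, T.run {i} = {i}) : S.card ≤ 2 ^ T.depth := by
  induction T generalizing S with
  | leaf g =>
      have hc : S.card ≤ 1 := by
        refine Finset.card_le_one.mpr ?_
        intro a ha b hb
        have h1 := h a ha
        have h2 := h b hb
        simp only [GTTree.run] at h1 h2
        have : ({a} : Finset (Fin n)) = {b} := by rw [← h1, ← h2]
        simpa using this
      simpa [GTTree.depth] using hc
  | node t p q ihp ihq =>
      have hsplit : S.card ≤ (S ∩ t).card + (S \ t).card := by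
        rw [Finset.card_inter_add_card_sdiff]
      have hp : (S ∩ t).card ≤ 2 ^ p.depth := by
        refine ihp _ fun i hi => ?_
        have hit : i ∈ t := (Finset.mem_inter.mp hi).2
        have hiS : i ∈ S := (Finset.mem_inter.mp hi).1
        have := h i hiS
        simp only [GTTree.run] at this
        rwa [if_pos ⟨i, by simp [hit]⟩] at this
      have hq : (S \ t).card ≤ 2 ^ q.depth := by
        refine ihq _ fun i hi => ?_
        have hit : i ∉ t := (Finset.mem_sdiff.mp hi).2
        have hiS : i ∈ S := (Finset.mem_sdiff.mp hi).1
        have := h i hiS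
        simp only [GTTree.run] at this
        rwa [if_neg (by simp [Finset.inter_singleton_of_notMem hit])] at this
      calc S.card ≤ (S ∩ t).card + (S \ t).card := hsplit
        _ ≤ 2 ^ p.depth + 2 ^ q.depth := Nat.add_le_add hp hq
        _ ≤ 2 ^ (max p.depth q.depth) + 2 ^ (max p.depth q.depth) := by
            exact Nat.add_le_add (Nat.pow_le_pow_right (by norm_num) (le_max_left _ _))
              (Nat.pow_le_pow_right (by norm_num) (le_max_right _ _))
        _ = 2 ^ (max p.depth q.depth + 1) := by ring
        _ = 2 ^ GTTree.depth (.node t p q) := rfl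

lemma advBound {n k : ℕ} (hk : 0 < k) :
    ∀ (j : ℕ) (T : GTTree n), T.SizeK k → ∀ S : Finset (Fin n),
      (∀ i ∈ S, T.run {i} = {i}) → j * k + 2 ≤ S.card →
      j + Nat.clog 2 (S.card - j * k) ≤ T.depth := by
  intro j
  induction j with
  | zero =>
      intro T _ S h _
      simpa using (Nat.clog_le_iff_le_pow one_lt_two).mpr (infoBound T S h)
  | succ j ih =>
      intro T hs S h hcard
      cases T with
      | leaf g =>
          exfalso
          have := infoBound (.leaf g) S h
          simp only [GTTree.depth, pow_zero] at this
          omega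
      | node t p q =>
          obtain ⟨htk, hps, hqs⟩ := hs
          have hq : ∀ i ∈ S \ t, q.run {i} = {i} := by
            intro i hi
            have hit : i ∉ t := (Finset.mem_sdiff.mp hi).2
            have := h i (Finset.mem_sdiff.mp hi).1
            simp only [GTTree.run] at this
            rwa [if_neg (by simp [Finset.inter_singleton_of_notMem hit])] at this
          have hmul : (j + 1) * k = j * k + k := by ring
          have hcard' : j * k + 2 ≤ (S \ t).card := by
            have := Finset.le_card_sdiff t S
            rw [htk] at this
            omega
          have hrec := ih q hqs (S \ t) hq hcard'
          have hmono : Nat.clog 2 (S.card - (j + 1) * k) ≤ Nat.clog 2 ((S \ t).card - j * k) := by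
            refine Nat.clog_mono_right _ ?_
            have := Finset.le_card_sdiff t S
            rw [htk] at this
            omega
          have : (j + 1) + Nat.clog 2 (S.card - (j + 1) * k) ≤ q.depth + 1 := by omega
          refine this.trans ?_
          simp only [GTTree.depth]
          omega

theorem stmt9 (k n : ℕ) (hk : 0 < k) (hkn : k < n) :
    (((⌈(n : ℚ) / k⌉₊ - 2) + Nat.clog 2 (n - (⌈(n : ℚ) / k⌉₊ - 2) * k) : ℕ) : ℕ∞)
      ≤ Mfix k 1 n := by
  set q := ⌈(n : ℚ) / k⌉₊ with hq
  have hk' : (0 : ℚ) < (k : ℚ) := by exact_mod_cast hk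
  have hq2 : 2 ≤ q := by
    have : (1 : ℚ) < (n : ℚ) / k := by
      rw [one_lt_div hk']
      exact_mod_cast hkn
    have h1 : (1 : ℕ) < q := by
      rw [hq]
      exact Nat.lt_ceil.mpr (by exact_mod_cast this)
    omega
  have hqk : (q - 1) * k < n := by
    have h1 : ((q - 1 : ℕ) : ℚ) < (n : ℚ) / k := Nat.lt_ceil.mp (by omega)
    have h2 : ((q - 1 : ℕ) : ℚ) * k < n := (lt_div_iff₀ hk').mp h1
    exact_mod_cast h2
  have hcard : (q - 2) * k + 2 ≤ n := by
    have : (q - 1) * k = (q - 2) * k + k := by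
      have : q - 1 = (q - 2) + 1 := by omega
      rw [this]; ring
    omega
  refine le_sInf ?_
  rintro c ⟨T, hsk, hsol, rfl⟩
  have hrun : ∀ i ∈ (Finset.univ : Finset (Fin n)), T.run {i} = {i} := by
    intro i _
    exact hsol {i} (Finset.card_singleton i)
  have hbound := advBound hk (q - 2) T hsk Finset.univ hrun
    (by simpa using hcard)
  simp only [Finset.card_univ, Fintype.card_fin] at hbound
  exact_mod_cast hbound
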